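/- Let n ≥ 2, let A be a real n×n singular irreducible M-matrix, and let L_G and U_G be the FSAI factors associated with the complete patterns S_L = {(i,j) : i ≥ j} \ {(n,n−1)} and S_U = {(i,j) : i ≤ j} \ {(n−1,n)}. Then L_G A U_G is a diagonal matrix except possibly for its (n,n−1) and (n−1,n) entries; its diagonal entries d_1, …, d_n are strictly positive; and d_{n−1} d_n = (L_G A U_G)_{n,n−1} · (L_G A U_G)_{n−1,n}. -/

import Mathlib

open Matrix
open Polynomial Finset Filter

/-- The spectral radius of a real matrix: the maximum modulus of its complex
eigenvalues (supremum of moduli of elements of the complex spectrum). -/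
noncomputable def specRad {n : ℕ} (B : Matrix (Fin n) (Fin n) ℝ) : ℝ :=
  sSup ((fun z : ℂ => ‖z‖) '' spectrum ℂ (B.map Complex.ofReal))

/-- A real square matrix is a Z-matrix if its off-diagonal entries are nonpositive. -/
def IsZMatrix {n : ℕ} (A : Matrix (Fin n) (Fin n) ℝ) : Prop :=
  ∀ i j, i ≠ j → A i j ≤ 0

/-- A Z-matrix `A` is a nonsingular M-matrix if `A = s • 1 - B` with `B`
entrywise nonnegative and `s > ρ(B)`. -/
def IsNonsingularMMatrix {n : ℕ} (A : Matrix (Fin n) (Fin n) ℝ) : Prop :=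
  IsZMatrix A ∧ ∃ (s : ℝ) (B : Matrix (Fin n) (Fin n) ℝ),
    (∀ i j, 0 ≤ B i j) ∧ specRad B < s ∧ A = s • (1 : Matrix (Fin n) (Fin n) ℝ) - B

/-- A Z-matrix `A` is a singular M-matrix if `A = ρ(B) • 1 - B` with `B`
entrywise nonnegative. -/
def IsSingularMMatrix {n : ℕ} (A : Matrix (Fin n) (Fin n) ℝ) : Prop :=
  IsZMatrix A ∧ ∃ B : Matrix (Fin n) (Fin n) ℝ,
    (∀ i j, 0 ≤ B i j) ∧ A = specRad B • (1 : Matrix (Fin n) (Fin n) ℝ) - B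

/-- A matrix is irreducible if its directed graph (edge `i → j` iff `A i j ≠ 0`)
is strongly connected. -/
def IsIrreducibleMatrix {n : ℕ} (A : Matrix (Fin n) (Fin n) ℝ) : Prop :=
  ∀ i j : Fin n, Relation.ReflTransGen (fun a b : Fin n => A a b ≠ 0) i j

/-- Lower triangular real matrix. -/
def IsLowerTri {n : ℕ} (L : Matrix (Fin n) (Fin n) ℝ) : Prop :=
  ∀ i j : Fin n, i < j → L i j = 0

/-- Upper triangular real matrix. -/
def IsUpperTri {n : ℕ} (U : Matrix (Fin n) (Fin n) ℝ) : Prop :=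
  ∀ i j : Fin n, j < i → U i j = 0

/-- `L` is an FSAI lower triangular factor of `A` for the pattern `S`:
`L` is lower triangular, vanishes off the pattern, and `(L * A) i j = δ i j`
on the pattern. -/
def IsFSAILowerFactor {n : ℕ} (A L : Matrix (Fin n) (Fin n) ℝ)
    (S : Set (Fin n × Fin n)) : Prop :=
  IsLowerTri L ∧ (∀ p : Fin n × Fin n, p ∉ S → L p.1 p.2 = 0) ∧
    ∀ p : Fin n × Fin n, p ∈ S → (L * A) p.1 p.2 = if p.1 = p.2 then 1 else 0

/-- `U` is an FSAI upper triangular factor of `A` for the pattern `S`: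
`U` is upper triangular, vanishes off the pattern, and `(A * U) i j = δ i j`
on the pattern. -/
def IsFSAIUpperFactor {n : ℕ} (A U : Matrix (Fin n) (Fin n) ℝ)
    (S : Set (Fin n × Fin n)) : Prop :=
  IsUpperTri U ∧ (∀ p : Fin n × Fin n, p ∉ S → U p.1 p.2 = 0) ∧
    ∀ p : Fin n × Fin n, p ∈ S → (A * U) p.1 p.2 = if p.1 = p.2 then 1 else 0

namespace FSAIAux

variable {m : ℕ}




lemma det_eq_charpoly_eval (M : Matrix (Fin n) (Fin n) ℂ) (z : ℂ) :
    (z • (1 : Matrix (Fin n) (Fin n) ℂ) - M).det = M.charpoly.eval z := by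
  have h : (z • (1 : Matrix (Fin n) (Fin n) ℂ) - M) = (charmatrix M).map (evalRingHom z) := by
    ext i j
    by_cases h : i = j <;>
      simp [h, charmatrix_apply, Matrix.one_apply, Matrix.diagonal_apply]
  have h2 := RingHom.map_det (evalRingHom z) (charmatrix M)
  rw [h, ← RingHom.mapMatrix_apply, ← h2, Matrix.charpoly]
  rfl

lemma mem_spectrum_iff_det (M : Matrix (Fin n) (Fin n) ℂ) (z : ℂ) :
    z ∈ spectrum ℂ M ↔ (z • (1 : Matrix (Fin n) (Fin n) ℂ) - M).det = 0 := by
  rw [spectrum.mem_iff, Algebra.algebraMap_eq_smul_one, Matrix.isUnit_iff_isUnit_det,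
    isUnit_iff_ne_zero, not_not]

lemma spectrum_finite (M : Matrix (Fin n) (Fin n) ℂ) : (spectrum ℂ M).Finite := by
  apply Set.Finite.subset (Polynomial.finite_setOf_isRoot (M.charpoly_monic.ne_zero))
  intro z hz
  rw [mem_spectrum_iff_det, det_eq_charpoly_eval] at hz
  exact hz

lemma spectrum_nonempty (hn : 1 ≤ n) (M : Matrix (Fin n) (Fin n) ℂ) :
    (spectrum ℂ M).Nonempty := by
  have : Nontrivial (Fin n) → True := fun _ => trivial
  have hdeg : 0 < M.charpoly.degree := by
    rw [Matrix.charpoly_degree_eq_dim, Fintype.card_fin]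
    exact_mod_cast hn
  obtain ⟨z, hz⟩ := Complex.exists_root hdeg
  exact ⟨z, by rw [mem_spectrum_iff_det, det_eq_charpoly_eval]; exact hz⟩

lemma exists_eigenvector {M : Matrix (Fin n) (Fin n) ℂ} {z : ℂ} (hz : z ∈ spectrum ℂ M) :
    ∃ v, v ≠ 0 ∧ M.mulVec v = z • v := by
  rw [mem_spectrum_iff_det] at hz
  obtain ⟨v, hv0, hv⟩ := (Matrix.exists_mulVec_eq_zero_iff).2 hz
  refine ⟨v, hv0, ?_⟩
  have := hv
  rw [Matrix.sub_mulVec, Matrix.smul_mulVec, Matrix.one_mulVec, sub_eq_zero] at this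
  exact this.symm

lemma abs_le_specRad {B : Matrix (Fin n) (Fin n) ℝ} {z : ℂ}
    (hz : z ∈ spectrum ℂ (B.map Complex.ofReal)) : ‖z‖ ≤ specRad B :=
  le_csSup (((spectrum_finite _).image _).bddAbove) (Set.mem_image_of_mem _ hz)

lemma exists_abs_eq_specRad (hn : 1 ≤ n) (B : Matrix (Fin n) (Fin n) ℝ) :
    ∃ z ∈ spectrum ℂ (B.map Complex.ofReal), ‖z‖ = specRad B := by
  have h1 : ((fun z : ℂ => ‖z‖) '' spectrum ℂ (B.map Complex.ofReal)).Nonempty :=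
    (spectrum_nonempty hn _).image _
  have h2 : ((fun z : ℂ => ‖z‖) '' spectrum ℂ (B.map Complex.ofReal)).Finite :=
    Set.Finite.image _ (spectrum_finite (B.map Complex.ofReal))
  obtain ⟨z, hz, hz2⟩ := h1.csSup_mem h2
  exact ⟨z, hz, hz2⟩

lemma specRad_nonneg (hn : 1 ≤ n) (B : Matrix (Fin n) (Fin n) ℝ) : 0 ≤ specRad B := by
  obtain ⟨z, _, hz⟩ := exists_abs_eq_specRad hn B
  rw [← hz]; exact norm_nonneg z

lemma mem_spectrum_ofReal_of_det {B : Matrix (Fin n) (Fin n) ℝ} {s : ℝ}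
    (h : (s • (1 : Matrix (Fin n) (Fin n) ℝ) - B).det = 0) :
    (s : ℂ) ∈ spectrum ℂ (B.map Complex.ofReal) := by
  rw [mem_spectrum_iff_det]
  have hmap : ((s : ℂ) • (1 : Matrix (Fin n) (Fin n) ℂ) - B.map Complex.ofReal)
      = (s • (1 : Matrix (Fin n) (Fin n) ℝ) - B).map Complex.ofReal := by
    ext i j
    by_cases hij : i = j <;> simp [hij, Matrix.one_apply, Matrix.map_apply]
  rw [hmap]
  have h2 := RingHom.map_det Complex.ofRealHom (s • (1 : Matrix (Fin n) (Fin n) ℝ) - B)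
  have : ((s • (1 : Matrix (Fin n) (Fin n) ℝ) - B).map Complex.ofReal).det
      = ((s • (1 : Matrix (Fin n) (Fin n) ℝ) - B).det : ℂ) := by
    rw [show (s • (1 : Matrix (Fin n) (Fin n) ℝ) - B).map Complex.ofReal
        = Complex.ofRealHom.mapMatrix (s • (1 : Matrix (Fin n) (Fin n) ℝ) - B) from rfl, ← h2]
    rfl
  rw [this, h, Complex.ofReal_zero]

lemma det_ne_zero_of_specRad_lt {B : Matrix (Fin n) (Fin n) ℝ} {s : ℝ}
    (hs : specRad B < s) : (s • (1 : Matrix (Fin n) (Fin n) ℝ) - B).det ≠ 0 := by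
  intro h
  have h1 := abs_le_specRad (mem_spectrum_ofReal_of_det h)
  rw [Complex.norm_real, Real.norm_eq_abs] at h1
  have := le_abs_self s
  linarith




lemma specRad_le_of_subinvariant (hm : 1 ≤ m) {C : Matrix (Fin m) (Fin m) ℝ}
    (hC : ∀ i j, 0 ≤ C i j) {x : Fin m → ℝ} (hx : ∀ i, 0 < x i) {t : ℝ}
    (ht : ∀ i, ∑ j, C i j * x j ≤ t * x i) : specRad C ≤ t := by
  have i0 : Fin m := ⟨0, hm⟩
  have ht0 : 0 ≤ t := by
    have h1 : (0:ℝ) ≤ ∑ j, C i0 j * x j :=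
      Finset.sum_nonneg fun j _ => mul_nonneg (hC _ _) (hx _).le
    nlinarith [ht i0, hx i0]
  apply Real.sSup_le _ ht0
  rintro r ⟨z, hz, rfl⟩
  obtain ⟨v, hv0, hv⟩ := exists_eigenvector hz
  obtain ⟨i₀, -, hmax⟩ := Finset.exists_max_image Finset.univ
    (fun j => ‖v j‖ / x j) ⟨i0, Finset.mem_univ _⟩
  set μ := ‖v i₀‖ / x i₀ with hμ
  have hle : ∀ j, ‖v j‖ ≤ μ * x j := by
    intro j
    exact (div_le_iff₀ (hx j)).1 (hmax j (Finset.mem_univ j))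
  have hμpos : 0 < μ := by
    have hj : ∃ j, v j ≠ 0 := by
      by_contra hcon
      push_neg at hcon
      exact hv0 (funext fun j => hcon j)
    obtain ⟨j, hj⟩ := hj
    calc (0:ℝ) < ‖v j‖ / x j :=
          div_pos (norm_pos_iff.mpr hj) (hx j)
      _ ≤ μ := hmax j (Finset.mem_univ j)
  have hvi₀ : ‖v i₀‖ = μ * x i₀ := by
    rw [hμ, div_mul_cancel₀]
    exact (hx i₀).ne'
  have heig : ∑ j, (C i₀ j : ℂ) * v j = z * v i₀ := by
    have h1 := congrFun hv i₀
    simpa [Matrix.mulVec, dotProduct, Matrix.map_apply, Pi.smul_apply,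
      smul_eq_mul] using h1
  have hchain : ‖z‖ * (μ * x i₀) ≤ t * (μ * x i₀) := by
    have h1 : ‖z‖ * (μ * x i₀) = ‖z * v i₀‖ := by
      rw [norm_mul, hvi₀]
    have h2 : ‖z * v i₀‖ ≤ ∑ j, C i₀ j * ‖v j‖ := by
      rw [← heig]
      refine le_trans (norm_sum_le _ _) (le_of_eq ?_)
      refine Finset.sum_congr rfl fun j _ => ?_
      rw [norm_mul, Complex.norm_real, Real.norm_eq_abs, abs_of_nonneg (hC i₀ j)]
    have h3 : ∑ j, C i₀ j * ‖v j‖ ≤ μ * ∑ j, C i₀ j * x j := by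
      rw [Finset.mul_sum]
      refine Finset.sum_le_sum fun j _ => ?_
      calc C i₀ j * ‖v j‖ ≤ C i₀ j * (μ * x j) :=
            mul_le_mul_of_nonneg_left (hle j) (hC i₀ j)
        _ = μ * (C i₀ j * x j) := by ring
    have h4 : μ * ∑ j, C i₀ j * x j ≤ μ * (t * x i₀) :=
      mul_le_mul_of_nonneg_left (ht i₀) hμpos.le
    calc ‖z‖ * (μ * x i₀) = ‖z * v i₀‖ := h1
      _ ≤ ∑ j, C i₀ j * ‖v j‖ := h2
      _ ≤ μ * ∑ j, C i₀ j * x j := h3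
      _ ≤ μ * (t * x i₀) := h4
      _ = t * (μ * x i₀) := by ring
  have hpos : 0 < μ * x i₀ := mul_pos hμpos (hx i₀)
  exact le_of_mul_le_mul_right (by linarith [hchain]) hpos

lemma pow_entry_nonneg {B : Matrix (Fin m) (Fin m) ℝ} (hB : ∀ i j, 0 ≤ B i j) :
    ∀ (K : ℕ) i j, 0 ≤ (B ^ K) i j := by
  intro K
  induction K with
  | zero => intro i j; by_cases h : i = j <;> simp [pow_zero, Matrix.one_apply, h]
  | succ K ih =>
    intro i j
    rw [pow_succ, Matrix.mul_apply]
    exact Finset.sum_nonneg fun k _ => mul_nonneg (ih _ _) (hB _ _)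

lemma pow_entry_le {B : Matrix (Fin m) (Fin m) ℝ} (hB : ∀ i j, 0 ≤ B i j) {c : ℝ}
    (hc : ∀ i j, B i j ≤ c) (hc0 : 0 ≤ c) :
    ∀ (K : ℕ) i j, (B ^ K) i j ≤ ((m : ℝ) * c) ^ K := by
  intro K
  induction K with
  | zero => intro i j; by_cases h : i = j <;> simp [pow_zero, Matrix.one_apply, h]
  | succ K ih =>
    intro i j
    rw [pow_succ, Matrix.mul_apply]
    calc ∑ k, (B ^ K) i k * B k j ≤ ∑ _k : Fin m, ((m:ℝ) * c) ^ K * c := by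
          refine Finset.sum_le_sum fun k _ => ?_
          exact mul_le_mul (ih i k) (hc k j) (hB k j) (by positivity)
      _ = (m:ℝ) * (((m:ℝ)*c)^K * c) := by
          rw [Finset.sum_const, Finset.card_univ, Fintype.card_fin, nsmul_eq_mul]
      _ = ((m:ℝ) * c) ^ (K+1) := by ring

lemma psum_mul {B : Matrix (Fin m) (Fin m) ℝ} {s : ℝ} (hs : s ≠ 0) (K : ℕ) :
    (s • (1 : Matrix (Fin m) (Fin m) ℝ) - B) * (∑ k ∈ Finset.range K, (s ^ (k+1))⁻¹ • B ^ k)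
      = 1 - (s ^ K)⁻¹ • B ^ K := by
  induction K with
  | zero => simp
  | succ K ih =>
    rw [Finset.sum_range_succ, mul_add, ih]
    have h1 : (s • (1 : Matrix (Fin m) (Fin m) ℝ) - B) * ((s ^ (K+1))⁻¹ • B ^ K)
        = (s ^ K)⁻¹ • B ^ K - (s ^ (K+1))⁻¹ • B ^ (K+1) := by
      rw [Matrix.mul_smul, sub_mul, Matrix.smul_mul, one_mul, smul_sub, smul_smul,
        ← pow_succ' B K]
      congr 2
      field_simp
      ring
    rw [h1]
    abel

lemma nonneg_of_forall_ge_neg_geom {a M r : ℝ} (hr0 : 0 ≤ r) (hr1 : r < 1)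
    (h : ∀ K : ℕ, -(M * r ^ K) ≤ a) : 0 ≤ a := by
  have h1 : Filter.Tendsto (fun K : ℕ => -(M * r ^ K)) Filter.atTop (nhds 0) := by
    have h2 := tendsto_pow_atTop_nhds_zero_of_lt_one hr0 hr1
    simpa using (h2.const_mul M).neg
  exact le_of_tendsto h1 (Filter.Eventually.of_forall h)

lemma inv_nonneg_of_large (hm : 1 ≤ m) {B : Matrix (Fin m) (Fin m) ℝ}
    (hB : ∀ i j, 0 ≤ B i j) {c s : ℝ} (hc : ∀ i j, B i j ≤ c) (hs : (m : ℝ) * c < s) :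
    ∀ i j, 0 ≤ (s • (1 : Matrix (Fin m) (Fin m) ℝ) - B)⁻¹ i j := by
  have i0 : Fin m := ⟨0, hm⟩
  have hc0 : 0 ≤ c := le_trans (hB i0 i0) (hc i0 i0)
  have hmc0 : 0 ≤ (m:ℝ) * c := by positivity
  have hs0 : 0 < s := lt_of_le_of_lt hmc0 hs
  have hρ : specRad B < s := by
    refine lt_of_le_of_lt (specRad_le_of_subinvariant hm hB (x := fun _ => (1:ℝ))
      (fun _ => one_pos) (t := (m:ℝ)*c) ?_) hs
    intro i
    calc ∑ j, B i j * 1 ≤ ∑ _j : Fin m, c := by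
          refine Finset.sum_le_sum fun j _ => ?_
          rw [mul_one]; exact hc i j
      _ = (m:ℝ) * c := by rw [Finset.sum_const, Finset.card_univ, Fintype.card_fin, nsmul_eq_mul]
      _ = (m:ℝ) * c * 1 := by ring
  have hdet := det_ne_zero_of_specRad_lt hρ
  have hunit : IsUnit (s • (1 : Matrix (Fin m) (Fin m) ℝ) - B).det := isUnit_iff_ne_zero.2 hdet
  set R := (s • (1 : Matrix (Fin m) (Fin m) ℝ) - B)⁻¹ with hR
  have hkey : ∀ K : ℕ, (∑ k ∈ Finset.range K, (s ^ (k+1))⁻¹ • B ^ k)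
      = R - (s ^ K)⁻¹ • (R * B ^ K) := by
    intro K
    have h1 := psum_mul (B := B) hs0.ne' K
    have h2 := congrArg (fun M => R * M) h1
    simp only [← mul_assoc] at h2
    rw [hR, Matrix.nonsing_inv_mul _ hunit, one_mul, mul_sub, mul_one, Matrix.mul_smul] at h2
    exact h2
  intro i j
  set e : ℝ := ∑ p : Fin m, ∑ q : Fin m, |R p q| with he
  have habs : ∀ p q, |R p q| ≤ e := by
    intro p q
    calc |R p q| ≤ ∑ q' : Fin m, |R p q'| :=
          Finset.single_le_sum (f := fun q' => |R p q'|) (fun q' _ => abs_nonneg _)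
            (Finset.mem_univ q)
      _ ≤ e := Finset.single_le_sum (f := fun p' => ∑ q' : Fin m, |R p' q'|)
          (fun p' _ => Finset.sum_nonneg fun q' _ => abs_nonneg _) (Finset.mem_univ p)
  have he0 : 0 ≤ e := le_trans (abs_nonneg (R i0 i0)) (habs i0 i0)
  apply nonneg_of_forall_ge_neg_geom (M := (m:ℝ) * e) (r := (m:ℝ)*c/s)
    (by positivity) ((div_lt_one hs0).2 hs)
  intro K
  have hKey := congrFun (congrFun (hkey K) i) j
  have hpsum : 0 ≤ (∑ k ∈ Finset.range K, (s ^ (k+1))⁻¹ • B ^ k) i j := by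
    rw [Matrix.sum_apply]
    refine Finset.sum_nonneg fun k _ => ?_
    rw [Matrix.smul_apply, smul_eq_mul]
    exact mul_nonneg (by positivity) (pow_entry_nonneg hB k i j)
  have hRB : -(e * ((m:ℝ)*c)^K * m) ≤ (R * B ^ K) i j := by
    rw [Matrix.mul_apply]
    calc -(e * ((m:ℝ)*c)^K * m) = ∑ _k : Fin m, -(e * ((m:ℝ)*c)^K) := by
          rw [Finset.sum_const, Finset.card_univ, Fintype.card_fin, nsmul_eq_mul]; ring
      _ ≤ ∑ k, R i k * (B ^ K) k j := by
          refine Finset.sum_le_sum fun k _ => ?_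
          have h6 : |R i k * (B^K) k j| ≤ e * ((m:ℝ)*c)^K := by
            rw [abs_mul, abs_of_nonneg (pow_entry_nonneg hB K k j)]
            exact mul_le_mul (habs i k) (pow_entry_le hB hc hc0 K k j)
              (pow_entry_nonneg hB K k j) he0
          linarith [neg_abs_le (R i k * (B^K) k j)]
  have hsub : R i j = (∑ k ∈ Finset.range K, (s ^ (k+1))⁻¹ • B ^ k) i j
      + (s ^ K)⁻¹ * (R * B ^ K) i j := by
    rw [hKey]
    simp [Matrix.sub_apply, Matrix.smul_apply, smul_eq_mul]
  rw [hsub]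
  have h7 : (s ^ K)⁻¹ * (R * B ^ K) i j ≥ -((m:ℝ) * e * ((m:ℝ)*c/s)^K) := by
    have h8 : (s^K)⁻¹ * -(e * ((m:ℝ)*c)^K * m) ≤ (s^K)⁻¹ * (R * B^K) i j :=
      mul_le_mul_of_nonneg_left hRB (by positivity)
    have h9 : (s^K)⁻¹ * -(e * ((m:ℝ)*c)^K * m) = -((m:ℝ) * e * ((m:ℝ)*c/s)^K) := by
      rw [div_pow]
      field_simp
    linarith
  linarith




lemma continuousAt_inv_entry {B : Matrix (Fin m) (Fin m) ℝ} {s₀ : ℝ}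
    (h : ((s₀ • (1:Matrix (Fin m) (Fin m) ℝ) - B)).det ≠ 0) (i j : Fin m) :
    ContinuousAt (fun s : ℝ => (s • (1:Matrix (Fin m) (Fin m) ℝ) - B)⁻¹ i j) s₀ := by
  have hfun : (fun s : ℝ => (s • (1:Matrix (Fin m) (Fin m) ℝ) - B)⁻¹ i j)
      = fun s : ℝ => ((s • (1:Matrix (Fin m) (Fin m) ℝ) - B).det)⁻¹
          * (s • (1:Matrix (Fin m) (Fin m) ℝ) - B).adjugate i j := by
    funext s
    rw [Matrix.inv_def, Matrix.smul_apply, smul_eq_mul, Ring.inverse_eq_inv']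
  rw [hfun]
  have hM : Continuous (fun s : ℝ => s • (1:Matrix (Fin m) (Fin m) ℝ) - B) :=
    (continuous_id.smul continuous_const).sub continuous_const
  exact ((hM.matrix_det.continuousAt).inv₀ h).mul
    ((hM.matrix_adjugate.matrix_elem i j).continuousAt)

lemma resolvent_nonneg (hm : 1 ≤ m) {B : Matrix (Fin m) (Fin m) ℝ} (hB : ∀ i j, 0 ≤ B i j)
    {s : ℝ} (hs : specRad B < s) :
    ∀ i j, 0 ≤ (s • (1 : Matrix (Fin m) (Fin m) ℝ) - B)⁻¹ i j := by
  set c : ℝ := ∑ p : Fin m, ∑ q : Fin m, B p q with hc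
  have hcb : ∀ i j, B i j ≤ c := by
    intro i j
    calc B i j ≤ ∑ q : Fin m, B i q :=
          Finset.single_le_sum (f := fun q => B i q) (fun q _ => hB i q) (Finset.mem_univ j)
      _ ≤ c := Finset.single_le_sum (f := fun p => ∑ q : Fin m, B p q)
          (fun p _ => Finset.sum_nonneg fun q _ => hB p q) (Finset.mem_univ i)
  have hc0 : 0 ≤ c := Finset.sum_nonneg fun p _ => Finset.sum_nonneg fun q _ => hB p q
  set T : ℝ := max s ((m:ℝ)*c) + 1 with hT
  have hsT : s ≤ T := le_trans (le_max_left _ _) (by linarith)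
  have hmcT : (m:ℝ)*c < T := lt_of_le_of_lt (le_max_right s _) (by linarith)
  have hT0 : 0 ≤ T := by positivity
  have hbig : ∀ t : ℝ, T ≤ t → ∀ p q, 0 ≤ (t • (1 : Matrix (Fin m) (Fin m) ℝ) - B)⁻¹ p q :=
    fun t htt => inv_nonneg_of_large hm hB hcb (lt_of_lt_of_le hmcT htt)
  by_contra hcon
  push_neg at hcon
  obtain ⟨i, j, hij⟩ := hcon
  set Bad : Set ℝ := {t | t ∈ Set.Icc s T ∧ ∃ p q,
    (t • (1 : Matrix (Fin m) (Fin m) ℝ) - B)⁻¹ p q < 0} with hBad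
  have hBadne : Bad.Nonempty := ⟨s, ⟨le_refl s, hsT⟩, i, j, hij⟩
  have hBadbdd : BddAbove Bad := ⟨T, fun t ht => ht.1.2⟩
  set u := sSup Bad with hu
  have hus : s ≤ u := le_csSup hBadbdd ⟨⟨le_refl s, hsT⟩, i, j, hij⟩
  have huT : u ≤ T := Real.sSup_le (fun t ht => ht.1.2) hT0
  have hu_gt : specRad B < u := lt_of_lt_of_le hs hus
  have hgood_right : ∀ t, u < t → ∀ p q,
      0 ≤ (t • (1 : Matrix (Fin m) (Fin m) ℝ) - B)⁻¹ p q := by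
    intro t hut p q
    by_cases hle : t ≤ T
    · by_contra hneg
      push_neg at hneg
      have htB : t ∈ Bad := ⟨⟨le_trans hus hut.le, hle⟩, p, q, hneg⟩
      have := le_csSup hBadbdd htB
      linarith
    · exact hbig t (le_of_lt (lt_of_not_ge hle)) p q
  have hgoodu : ∀ p q, 0 ≤ (u • (1 : Matrix (Fin m) (Fin m) ℝ) - B)⁻¹ p q := by
    intro p q
    have hdetu := det_ne_zero_of_specRad_lt hu_gt
    have hcont := (continuousAt_inv_entry hdetu p q).continuousWithinAt
      (s := Set.Ioi u)
    refine ge_of_tendsto hcont ?_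
    filter_upwards [self_mem_nhdsWithin] with t ht
    exact hgood_right t ht p q
  -- left openness at u
  set Ru := (u • (1 : Matrix (Fin m) (Fin m) ℝ) - B)⁻¹ with hRu
  set e : ℝ := ∑ p : Fin m, ∑ q : Fin m, Ru p q with he
  have heb : ∀ p q, Ru p q ≤ e := by
    intro p q
    calc Ru p q ≤ ∑ q' : Fin m, Ru p q' :=
          Finset.single_le_sum (f := fun q' => Ru p q') (fun q' _ => hgoodu p q')
            (Finset.mem_univ q)
      _ ≤ e := Finset.single_le_sum (f := fun p' => ∑ q' : Fin m, Ru p' q')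
          (fun p' _ => Finset.sum_nonneg fun q' _ => hgoodu p' q') (Finset.mem_univ p)
  have he0 : 0 ≤ e := Finset.sum_nonneg fun p _ => Finset.sum_nonneg fun q _ => hgoodu p q
  have hme : (0:ℝ) < (m:ℝ)*e+1 := by
    have h0 : (0:ℝ) ≤ (m:ℝ)*e := mul_nonneg (Nat.cast_nonneg m) he0
    linarith
  set δ : ℝ := 1 / ((m:ℝ)*e+1) with hδ
  have hδ0 : 0 < δ := by rw [hδ]; exact one_div_pos.mpr hme
  obtain ⟨b, hbBad, hb1⟩ := exists_lt_of_lt_csSup hBadne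
    (show u - δ < sSup Bad by rw [← hu]; linarith)
  have hb2 : b ≤ u := le_csSup hBadbdd hbBad
  obtain ⟨⟨hbs, hbT⟩, p, q, hneg⟩ := hbBad
  rcases eq_or_lt_of_le hb2 with hbe | hblt
  · rw [hbe] at hneg
    exact absurd (hgoodu p q) (not_le.2 hneg)
  · set N : Matrix (Fin m) (Fin m) ℝ := (u - b) • Ru with hN
    have hN0 : ∀ p' q', 0 ≤ N p' q' := by
      intro p' q'
      rw [hN, Matrix.smul_apply, smul_eq_mul]
      exact mul_nonneg (by linarith) (hgoodu p' q')
    have hNb : ∀ p' q', N p' q' ≤ (u - b) * e := by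
      intro p' q'
      rw [hN, Matrix.smul_apply, smul_eq_mul]
      exact mul_le_mul_of_nonneg_left (heb p' q') (by linarith)
    have hsmall : (m:ℝ) * ((u - b) * e) < 1 := by
      have hub : u - b < δ := by linarith
      have hub0 : (0:ℝ) ≤ u - b := by linarith
      have h1 : (m:ℝ) * ((u-b) * e) = (u-b) * ((m:ℝ)*e) := by ring
      have h2 : (u-b) * ((m:ℝ)*e) ≤ (u-b) * ((m:ℝ)*e+1) :=
        mul_le_mul_of_nonneg_left (by linarith) hub0
      have h3 : (u-b) * ((m:ℝ)*e+1) < δ * ((m:ℝ)*e+1) :=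
        mul_lt_mul_of_pos_right hub hme
      have h4 : δ * ((m:ℝ)*e+1) = 1 := by
        rw [hδ]
        exact one_div_mul_cancel hme.ne'
      linarith
    have hNinv := inv_nonneg_of_large hm hN0 hNb hsmall
    have hdetu := det_ne_zero_of_specRad_lt hu_gt
    have hunitu : IsUnit (u • (1 : Matrix (Fin m) (Fin m) ℝ) - B).det :=
      isUnit_iff_ne_zero.2 hdetu
    have hident : (b • (1 : Matrix (Fin m) (Fin m) ℝ) - B)
        = (u • (1 : Matrix (Fin m) (Fin m) ℝ) - B)
          * ((1:ℝ) • (1 : Matrix (Fin m) (Fin m) ℝ) - N) := by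
      rw [hN, one_smul, Matrix.mul_sub, mul_one, Matrix.mul_smul, hRu,
        Matrix.mul_nonsing_inv _ hunitu]
      ext p' q'
      simp only [Matrix.sub_apply, Matrix.smul_apply, Matrix.one_apply, smul_eq_mul]
      by_cases hpq : p' = q' <;> simp [hpq] <;> ring
    have hinvprod : (b • (1 : Matrix (Fin m) (Fin m) ℝ) - B)⁻¹
        = ((1:ℝ) • (1 : Matrix (Fin m) (Fin m) ℝ) - N)⁻¹ * Ru := by
      rw [hident, Matrix.mul_inv_rev, hRu]
    have : 0 ≤ (b • (1 : Matrix (Fin m) (Fin m) ℝ) - B)⁻¹ p q := by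
      rw [hinvprod, Matrix.mul_apply]
      exact Finset.sum_nonneg fun k _ => mul_nonneg (hNinv p k) (hgoodu k q)
    linarith

lemma det_specRad_smul_sub (hm : 1 ≤ m) {B : Matrix (Fin m) (Fin m) ℝ}
    (hB : ∀ i j, 0 ≤ B i j) :
    (specRad B • (1 : Matrix (Fin m) (Fin m) ℝ) - B).det = 0 := by
  by_contra hdet
  set ρ := specRad B with hρ
  set R₀ := (ρ • (1 : Matrix (Fin m) (Fin m) ℝ) - B)⁻¹ with hR₀
  have hunit : IsUnit (ρ • (1 : Matrix (Fin m) (Fin m) ℝ) - B).det := isUnit_iff_ne_zero.2 hdet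
  have hR₀0 : ∀ p q, 0 ≤ R₀ p q := by
    intro p q
    have hcont := (continuousAt_inv_entry hdet p q).continuousWithinAt (s := Set.Ioi ρ)
    refine ge_of_tendsto hcont ?_
    filter_upwards [self_mem_nhdsWithin] with t ht
    exact resolvent_nonneg hm hB ht p q
  obtain ⟨z, hz, habs⟩ := exists_abs_eq_specRad hm B
  obtain ⟨v, hv0, hv⟩ := exists_eigenvector hz
  set w : Fin m → ℝ := fun i => ‖v i‖ with hw
  have hwpos : ∃ i, 0 < w i := by
    by_contra hcon
    push_neg at hcon
    apply hv0
    funext i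
    have := hcon i
    have h2 := norm_nonneg (v i)
    have : ‖v i‖ = 0 := le_antisymm (hcon i) h2
    exact norm_eq_zero.1 this
  have hsub : ∀ i, ρ * w i ≤ ∑ j, B i j * w j := by
    intro i
    have h1 := congrFun hv i
    have h2 : ∑ j, (B i j : ℂ) * v j = z * v i := by
      simpa [Matrix.mulVec, dotProduct, Matrix.map_apply, Pi.smul_apply,
        smul_eq_mul] using h1
    calc ρ * w i = ‖z * v i‖ := by
          rw [norm_mul, habs, hw]
      _ = ‖∑ j, (B i j : ℂ) * v j‖ := by rw [h2]
      _ ≤ ∑ j, ‖(B i j : ℂ) * v j‖ := norm_sum_le _ _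
      _ = ∑ j, B i j * w j := by
          refine Finset.sum_congr rfl fun j _ => ?_
          rw [norm_mul, Complex.norm_real, Real.norm_eq_abs, abs_of_nonneg (hB i j)]
  set y := (ρ • (1 : Matrix (Fin m) (Fin m) ℝ) - B).mulVec w with hy
  have hy0 : ∀ i, y i ≤ 0 := by
    intro i
    rw [hy, Matrix.sub_mulVec, Matrix.smul_mulVec, Matrix.one_mulVec]
    simp only [Pi.sub_apply, Pi.smul_apply, smul_eq_mul]
    have h3 : (B.mulVec w) i = ∑ j, B i j * w j := by
      simp [Matrix.mulVec, dotProduct]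
    rw [h3]
    linarith [hsub i]
  have hwy : w = R₀.mulVec y := by
    rw [hy, Matrix.mulVec_mulVec, hR₀, Matrix.nonsing_inv_mul _ hunit, Matrix.one_mulVec]
  obtain ⟨i, hi⟩ := hwpos
  have : w i ≤ 0 := by
    rw [hwy]
    have h4 : (R₀.mulVec y) i = ∑ j, R₀ i j * y j := by
      simp [Matrix.mulVec, dotProduct]
    rw [h4]
    exact Finset.sum_nonpos fun j _ => mul_nonpos_of_nonneg_of_nonpos (hR₀0 i j) (hy0 j)
  linarith

lemma le_specRad_of_supinvariant (hm : 1 ≤ m) {B : Matrix (Fin m) (Fin m) ℝ}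
    (hB : ∀ i j, 0 ≤ B i j) {x : Fin m → ℝ} (hx : ∀ i, 0 ≤ x i) (hxne : ∃ i, 0 < x i)
    {t : ℝ} (h : ∀ i, t * x i ≤ ∑ j, B i j * x j) : t ≤ specRad B := by
  by_contra hcon
  push_neg at hcon
  have hres := resolvent_nonneg hm hB hcon
  have hdet := det_ne_zero_of_specRad_lt hcon
  have hunit : IsUnit (t • (1 : Matrix (Fin m) (Fin m) ℝ) - B).det := isUnit_iff_ne_zero.2 hdet
  set y := (t • (1 : Matrix (Fin m) (Fin m) ℝ) - B).mulVec x with hy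
  have hy0 : ∀ i, y i ≤ 0 := by
    intro i
    rw [hy, Matrix.sub_mulVec, Matrix.smul_mulVec, Matrix.one_mulVec]
    simp only [Pi.sub_apply, Pi.smul_apply, smul_eq_mul]
    have h3 : (B.mulVec x) i = ∑ j, B i j * x j := by
      simp [Matrix.mulVec, dotProduct]
    rw [h3]
    linarith [h i]
  have hxy : x = ((t • (1 : Matrix (Fin m) (Fin m) ℝ) - B)⁻¹).mulVec y := by
    rw [hy, Matrix.mulVec_mulVec, Matrix.nonsing_inv_mul _ hunit, Matrix.one_mulVec]
  obtain ⟨i, hi⟩ := hxne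
  have : x i ≤ 0 := by
    rw [hxy]
    have h4 : (((t • (1 : Matrix (Fin m) (Fin m) ℝ) - B)⁻¹).mulVec y) i
        = ∑ j, (t • (1 : Matrix (Fin m) (Fin m) ℝ) - B)⁻¹ i j * y j := by
      simp [Matrix.mulVec, dotProduct]
    rw [h4]
    exact Finset.sum_nonpos fun j _ => mul_nonpos_of_nonneg_of_nonpos (hres i j) (hy0 j)
  linarith




lemma mulVec_entry (B : Matrix (Fin m) (Fin m) ℝ) (x : Fin m → ℝ) (i : Fin m) :
    B.mulVec x i = ∑ j, B i j * x j := by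
  simp [Matrix.mulVec, dotProduct]

lemma onePlus_nonneg {B : Matrix (Fin m) (Fin m) ℝ} (hB : ∀ i j, 0 ≤ B i j) :
    ∀ i j, 0 ≤ (1 + B) i j := by
  intro i j
  rw [Matrix.add_apply, Matrix.one_apply]
  by_cases h : i = j
  · rw [if_pos h]
    linarith [hB i j]
  · rw [if_neg h]
    linarith [hB i j]

lemma mulVec_nonneg {B : Matrix (Fin m) (Fin m) ℝ} (hB : ∀ i j, 0 ≤ B i j)
    {z : Fin m → ℝ} (hz : ∀ i, 0 ≤ z i) : ∀ i, 0 ≤ B.mulVec z i := by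
  intro i
  rw [mulVec_entry]
  exact Finset.sum_nonneg fun j _ => mul_nonneg (hB i j) (hz j)

lemma onePlusPow_mulVec_nonneg {B : Matrix (Fin m) (Fin m) ℝ} (hB : ∀ i j, 0 ≤ B i j)
    {z : Fin m → ℝ} (hz : ∀ i, 0 ≤ z i) (K : ℕ) : ∀ i, 0 ≤ ((1 + B) ^ K).mulVec z i :=
  mulVec_nonneg (pow_entry_nonneg (onePlus_nonneg hB) K) hz

lemma onePlusPow_mulVec_step {B : Matrix (Fin m) (Fin m) ℝ} (hB : ∀ i j, 0 ≤ B i j)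
    {z : Fin m → ℝ} (hz : ∀ i, 0 ≤ z i) (K : ℕ) (i : Fin m) :
    ((1 + B) ^ K).mulVec z i ≤ ((1 + B) ^ (K+1)).mulVec z i := by
  have h1 : ((1+B)^(K+1)).mulVec z = (1+B).mulVec (((1+B)^K).mulVec z) := by
    rw [Matrix.mulVec_mulVec, ← pow_succ']
  rw [h1, Matrix.add_mulVec, Matrix.one_mulVec, Pi.add_apply]
  have h2 := mulVec_nonneg hB (onePlusPow_mulVec_nonneg hB hz K) i
  linarith

lemma onePlusPow_mulVec_mono {B : Matrix (Fin m) (Fin m) ℝ} (hB : ∀ i j, 0 ≤ B i j)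
    {z : Fin m → ℝ} (hz : ∀ i, 0 ≤ z i) {K K' : ℕ} (hKK : K ≤ K') (i : Fin m) :
    ((1 + B) ^ K).mulVec z i ≤ ((1 + B) ^ K').mulVec z i := by
  induction K', hKK using Nat.le_induction with
  | base => exact le_refl _
  | succ K' hKK ih => exact le_trans ih (onePlusPow_mulVec_step hB hz K' i)

lemma reach_pos {B : Matrix (Fin m) (Fin m) ℝ} (hB : ∀ i j, 0 ≤ B i j)
    {z : Fin m → ℝ} (hz : ∀ i, 0 ≤ z i) {k₀ : Fin m} (hk₀ : 0 < z k₀) {i : Fin m}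
    (hreach : Relation.ReflTransGen (fun a b => B a b ≠ 0) i k₀) :
    ∃ K, 0 < ((1 + B) ^ K).mulVec z i := by
  induction hreach using Relation.ReflTransGen.head_induction_on with
  | refl => exact ⟨0, by simpa [Matrix.one_mulVec] using hk₀⟩
  | head hedge _ ih =>
    rename_i a c _
    obtain ⟨K, hK⟩ := ih
    refine ⟨K + 1, ?_⟩
    have h1 : ((1+B)^(K+1)).mulVec z = (1+B).mulVec (((1+B)^K).mulVec z) := by
      rw [Matrix.mulVec_mulVec, ← pow_succ']
    rw [h1, Matrix.add_mulVec, Matrix.one_mulVec, Pi.add_apply]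
    set w := ((1+B)^K).mulVec z with hw
    have hw0 : ∀ p, 0 ≤ w p := onePlusPow_mulVec_nonneg hB hz K
    have hBac : 0 < B a c := lt_of_le_of_ne (hB a c) (Ne.symm hedge)
    have h2 : B a c * w c ≤ B.mulVec w a := by
      rw [mulVec_entry]
      exact Finset.single_le_sum (f := fun j => B a j * w j)
        (fun j _ => mul_nonneg (hB a j) (hw0 j)) (Finset.mem_univ c)
    have h3 : 0 < B a c * w c := mul_pos hBac hK
    have h4 := hw0 a
    linarith

lemma exists_pow_pos {B : Matrix (Fin m) (Fin m) ℝ} (hB : ∀ i j, 0 ≤ B i j)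
    (hirr : ∀ i j, Relation.ReflTransGen (fun a b => B a b ≠ 0) i j)
    {z : Fin m → ℝ} (hz : ∀ i, 0 ≤ z i) {k₀ : Fin m} (hk₀ : 0 < z k₀) :
    ∃ K, ∀ i, 0 < ((1 + B) ^ K).mulVec z i := by
  have h1 : ∀ i, ∃ K, 0 < ((1 + B) ^ K).mulVec z i :=
    fun i => reach_pos hB hz hk₀ (hirr i k₀)
  choose g hg using h1
  refine ⟨Finset.univ.sup g, fun i => ?_⟩
  exact lt_of_lt_of_le (hg i)
    (onePlusPow_mulVec_mono hB hz (Finset.le_sup (Finset.mem_univ i)) i)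

lemma exists_perron (hm : 1 ≤ m) {B : Matrix (Fin m) (Fin m) ℝ} (hB : ∀ i j, 0 ≤ B i j)
    (hirr : ∀ i j, Relation.ReflTransGen (fun a b => B a b ≠ 0) i j) :
    ∃ x : Fin m → ℝ, (∀ i, 0 < x i) ∧ B.mulVec x = specRad B • x := by
  set ρ := specRad B with hρ
  have hρ0 : 0 ≤ ρ := specRad_nonneg hm B
  have hdet := det_specRad_smul_sub hm hB
  obtain ⟨v, hv0, hv⟩ := Matrix.exists_mulVec_eq_zero_iff.2 hdet
  have hBv : B.mulVec v = ρ • v := by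
    have := hv
    rw [Matrix.sub_mulVec, Matrix.smul_mulVec, Matrix.one_mulVec, sub_eq_zero] at this
    exact this.symm
  set w : Fin m → ℝ := fun i => |v i| with hw
  have hw0 : ∀ i, 0 ≤ w i := fun i => abs_nonneg _
  have hwpos : ∃ k, 0 < w k := by
    by_contra hcon
    push_neg at hcon
    exact hv0 (funext fun i => abs_eq_zero.1 (le_antisymm (hcon i) (abs_nonneg _)))
  have hsub : ∀ i, ρ * w i ≤ ∑ j, B i j * w j := by
    intro i
    have h1 : ρ * v i = ∑ j, B i j * v j := by
      have h2 := congrFun hBv i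
      rw [mulVec_entry] at h2
      simp only [Pi.smul_apply, smul_eq_mul] at h2
      exact h2.symm
    calc ρ * w i = |ρ * v i| := by rw [abs_mul, abs_of_nonneg hρ0]
      _ = |∑ j, B i j * v j| := by rw [h1]
      _ ≤ ∑ j, |B i j * v j| := Finset.abs_sum_le_sum_abs _ _
      _ = ∑ j, B i j * w j := by
          refine Finset.sum_congr rfl fun j _ => ?_
          rw [abs_mul, abs_of_nonneg (hB i j)]
  set z0 : Fin m → ℝ := fun i => (∑ j, B i j * w j) - ρ * w i with hz0
  have hz00 : ∀ i, 0 ≤ z0 i := fun i => by simp only [hz0]; linarith [hsub i]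
  have hBw : ∀ i, B.mulVec w i = ρ * w i + z0 i := by
    intro i
    rw [mulVec_entry, hz0]
    ring
  have hweq : B.mulVec w = ρ • w := by
    by_contra hne
    have hz0ne : ∃ k, 0 < z0 k := by
      by_contra hcon
      push_neg at hcon
      apply hne
      funext i
      have h5 : z0 i = 0 := le_antisymm (hcon i) (hz00 i)
      rw [hBw i, h5, Pi.smul_apply, smul_eq_mul]
      ring
    obtain ⟨k, hk⟩ := hz0ne
    obtain ⟨k₁, hk₁⟩ := hwpos
    obtain ⟨K₁, hK₁⟩ := exists_pow_pos hB hirr hz00 hk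
    obtain ⟨K₂, hK₂⟩ := exists_pow_pos hB hirr hw0 hk₁
    set K := max K₁ K₂ with hK
    set P := (1 + B) ^ K with hP
    set u := P.mulVec w with hu
    set y := P.mulVec z0 with hy
    have hupos : ∀ i, 0 < u i := fun i =>
      lt_of_lt_of_le (hK₂ i) (onePlusPow_mulVec_mono hB hw0 (le_max_right K₁ K₂) i)
    have hypos : ∀ i, 0 < y i := fun i =>
      lt_of_lt_of_le (hK₁ i) (onePlusPow_mulVec_mono hB hz00 (le_max_left K₁ K₂) i)
    have hcomm : B * P = P * B := by
      rw [hP]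
      exact (((Commute.one_right B).add_right (Commute.refl B)).pow_right K).eq
    have hBu : B.mulVec u = ρ • u + y := by
      rw [hu, Matrix.mulVec_mulVec, hcomm, ← Matrix.mulVec_mulVec]
      have h6 : B.mulVec w = ρ • w + z0 := by
        funext i
        rw [hBw i]
        simp [smul_eq_mul]
      rw [h6, Matrix.mulVec_add, Matrix.mulVec_smul, hy]
    obtain ⟨i₁, -, hmin⟩ := Finset.exists_min_image Finset.univ
      (fun i => y i / u i) ⟨⟨0, hm⟩, Finset.mem_univ _⟩
    set ε := y i₁ / u i₁ with hε
    have hε0 : 0 < ε := div_pos (hypos i₁) (hupos i₁)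
    have hεy : ∀ i, ε * u i ≤ y i := by
      intro i
      have h7 := hmin i (Finset.mem_univ i)
      exact (le_div_iff₀ (hupos i)).1 h7
    have h8 : ρ + ε ≤ ρ := by
      apply le_specRad_of_supinvariant hm hB (fun i => (hupos i).le) ⟨⟨0,hm⟩, hupos _⟩
      intro i
      have h9 := congrFun hBu i
      rw [mulVec_entry] at h9
      simp only [Pi.add_apply, Pi.smul_apply, smul_eq_mul] at h9
      have := hεy i
      linarith
    linarith
  -- positivity of w
  have hwzero : ∀ i, 0 < w i := by
    by_contra hcon
    push_neg at hcon
    obtain ⟨i, hi⟩ := hcon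
    have hi0 : w i = 0 := le_antisymm hi (hw0 i)
    obtain ⟨k₁, hk₁⟩ := hwpos
    have hzero : ∀ c, Relation.ReflTransGen (fun a b => B a b ≠ 0) i c → w c = 0 := by
      intro c hc
      induction hc with
      | refl => exact hi0
      | tail hseg hedge ih =>
        rename_i b c'
        have h10 : ∑ j, B b j * w j = 0 := by
          have h11 := congrFun hweq b
          rw [mulVec_entry] at h11
          rw [h11, Pi.smul_apply, smul_eq_mul, ih, mul_zero]
        have h12 := (Finset.sum_eq_zero_iff_of_nonneg
          (fun j _ => mul_nonneg (hB b j) (hw0 j))).1 h10 c' (Finset.mem_univ c')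
        rcases mul_eq_zero.1 h12 with h | h
        · exact absurd h hedge
        · exact h
    have := hzero k₁ (hirr i k₁)
    linarith
  exact ⟨w, hwzero, hweq⟩




lemma irr_transfer {r s : Fin m → Fin m → Prop} (h : ∀ a b, a ≠ b → r a b → s a b)
    (hr : ∀ i j, Relation.ReflTransGen r i j) :
    ∀ i j, Relation.ReflTransGen s i j := by
  intro i j
  have hij := hr i j
  induction hij with
  | refl => exact Relation.ReflTransGen.refl
  | tail hseg hedge ih =>
    rename_i b c
    by_cases hbc : b = c
    · rwa [hbc] at ih
    · exact ih.tail (h b c hbc hedge)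

lemma specRad_submatrix_lt {n : ℕ} (hm : 1 ≤ m) {B : Matrix (Fin n) (Fin n) ℝ}
    (hB : ∀ i j, 0 ≤ B i j)
    (hirr : ∀ i j, Relation.ReflTransGen (fun a b => B a b ≠ 0) i j)
    {f : Fin m → Fin n} (hf : Function.Injective f) (hns : ¬ Function.Surjective f) :
    specRad (B.submatrix f f) < specRad B := by
  have hn : 1 ≤ n := (f ⟨0, hm⟩).pos
  obtain ⟨x, hx, hxe⟩ := exists_perron hn hB hirr
  set ρ := specRad B with hρdef
  set C := B.submatrix f f with hC
  have hC0 : ∀ i j, 0 ≤ C i j := fun i j => hB (f i) (f j)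
  have hrow : ∀ i : Fin n, ∑ k, B i k * x k = ρ * x i := by
    intro i
    have h1 := congrFun hxe i
    rw [mulVec_entry] at h1
    simpa [smul_eq_mul] using h1
  have hinj : ∀ (a : Fin m), a ∈ Finset.univ → ∀ (b : Fin m), b ∈ Finset.univ →
      f a = f b → a = b := fun a _ b _ hab => hf hab
  have hsubrow : ∀ i : Fin m, ∑ j, C i j * x (f j) ≤ ρ * x (f i) := by
    intro i
    have h1 : ∑ j : Fin m, B (f i) (f j) * x (f j)
        = ∑ k ∈ Finset.univ.image f, B (f i) k * x k := by
      rw [Finset.sum_image hinj]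
    have h2 : ∑ k ∈ Finset.univ.image f, B (f i) k * x k ≤ ∑ k : Fin n, B (f i) k * x k :=
      Finset.sum_le_sum_of_subset_of_nonneg (Finset.subset_univ _)
        (fun k _ _ => mul_nonneg (hB _ _) (hx k).le)
    calc ∑ j, C i j * x (f j) = ∑ k ∈ Finset.univ.image f, B (f i) k * x k := h1
      _ ≤ ∑ k : Fin n, B (f i) k * x k := h2
      _ = ρ * x (f i) := hrow (f i)
  have hle : specRad C ≤ ρ :=
    specRad_le_of_subinvariant hm hC0 (fun i => hx (f i)) hsubrow
  rcases lt_or_eq_of_le hle with hlt | heq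
  · exact hlt
  exfalso
  obtain ⟨z, hz, habs⟩ := exists_abs_eq_specRad hm C
  obtain ⟨v, hv0, hv⟩ := exists_eigenvector hz
  obtain ⟨j₀, -, hmax⟩ := Finset.exists_max_image Finset.univ
    (fun j => ‖v j‖ / x (f j)) ⟨⟨0, hm⟩, Finset.mem_univ _⟩
  set μ := ‖v j₀‖ / x (f j₀) with hμ
  have hlemu : ∀ j, ‖v j‖ ≤ μ * x (f j) := fun j =>
    (div_le_iff₀ (hx (f j))).1 (hmax j (Finset.mem_univ j))
  have hμpos : 0 < μ := by
    have hj : ∃ j, v j ≠ 0 := by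
      by_contra hcon
      push_neg at hcon
      exact hv0 (funext fun j => hcon j)
    obtain ⟨j, hj⟩ := hj
    calc (0:ℝ) < ‖v j‖ / x (f j) := div_pos (norm_pos_iff.mpr hj) (hx (f j))
      _ ≤ μ := hmax j (Finset.mem_univ j)
  have hstart : ‖v j₀‖ = μ * x (f j₀) := by
    rw [hμ, div_mul_cancel₀]
    exact (hx (f j₀)).ne'
  have key : ∀ i : Fin m, ‖v i‖ = μ * x (f i) →
      (∀ k, k ∉ Set.range f → B (f i) k = 0) ∧
      (∀ j : Fin m, B (f i) (f j) ≠ 0 → ‖v j‖ = μ * x (f j)) := by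
    intro i hi
    have heig : ∑ j, (C i j : ℂ) * v j = z * v i := by
      have h1 := congrFun hv i
      simpa [Matrix.mulVec, dotProduct, Matrix.map_apply, Pi.smul_apply,
        smul_eq_mul] using h1
    have c1 : ‖z * v i‖ ≤ ∑ j, C i j * ‖v j‖ := by
      rw [← heig]
      refine le_trans (norm_sum_le _ _) (le_of_eq ?_)
      refine Finset.sum_congr rfl fun j _ => ?_
      rw [norm_mul, Complex.norm_real, Real.norm_eq_abs, abs_of_nonneg (hC0 i j)]
    have c2 : ∑ j, C i j * ‖v j‖ ≤ ∑ j, C i j * (μ * x (f j)) :=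
      Finset.sum_le_sum fun j _ => mul_le_mul_of_nonneg_left (hlemu j) (hC0 i j)
    have c3 : ∑ j, C i j * (μ * x (f j)) = μ * ∑ j, C i j * x (f j) := by
      rw [Finset.mul_sum]
      exact Finset.sum_congr rfl fun j _ => by ring
    have c4 : μ * ∑ j, C i j * x (f j) ≤ μ * (ρ * x (f i)) :=
      mul_le_mul_of_nonneg_left (hsubrow i) hμpos.le
    have c5 : ‖z * v i‖ = ρ * (μ * x (f i)) := by
      rw [norm_mul, habs, heq, hi]
    -- all inequalities are equalities
    have e1 : ∑ j, C i j * ‖v j‖ = ∑ j, C i j * (μ * x (f j)) := by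
      apply le_antisymm c2
      linarith
    have e2 : ∑ j, C i j * x (f j) = ρ * x (f i) := by
      apply le_antisymm (hsubrow i)
      have h3 : μ * ∑ j, C i j * x (f j) ≥ μ * (ρ * x (f i)) := by linarith
      exact le_of_mul_le_mul_left h3 hμpos
    constructor
    · intro k hk
      have h4 : ∑ k' ∈ Finset.univ \ Finset.univ.image f, B (f i) k' * x k' = 0 := by
        have h5 := Finset.sum_sdiff (Finset.subset_univ (Finset.univ.image f))
          (f := fun k' => B (f i) k' * x k')
        have h6 : ∑ k' ∈ Finset.univ.image f, B (f i) k' * x k' = ρ * x (f i) := by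
          rw [Finset.sum_image hinj]
          exact e2
        rw [h6, hrow (f i)] at h5
        linarith
      have h7 := (Finset.sum_eq_zero_iff_of_nonneg
        (fun k' _ => mul_nonneg (hB _ _) (hx k').le)).1 h4 k
        (by
          rw [Finset.mem_sdiff]
          refine ⟨Finset.mem_univ k, fun hmem => hk ?_⟩
          obtain ⟨a, -, ha⟩ := Finset.mem_image.1 hmem
          exact ⟨a, ha⟩)
      rcases mul_eq_zero.1 h7 with h | h
      · exact h
      · exact absurd h (hx k).ne'
    · intro j hj
      have h8 := (Finset.sum_eq_sum_iff_of_le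
        (fun j' (_ : j' ∈ Finset.univ) =>
          mul_le_mul_of_nonneg_left (hlemu j') (hC0 i j'))).1 e1 j (Finset.mem_univ j)
      have h9 : C i j ≠ 0 := hj
      rw [mul_eq_mul_left_iff] at h8
      rcases h8 with h8 | h8
      · exact h8
      · exact absurd h8 h9
  obtain ⟨k₀, hk₀⟩ : ∃ k₀, k₀ ∉ Set.range f := by
    rw [Function.Surjective] at hns
    push_neg at hns
    obtain ⟨k₀, hk₀⟩ := hns
    exact ⟨k₀, fun ⟨a, ha⟩ => hk₀ a ha⟩
  have hprop : ∀ c : Fin n, Relation.ReflTransGen (fun a b => B a b ≠ 0) (f j₀) c →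
      ∃ j : Fin m, f j = c ∧ ‖v j‖ = μ * x (f j) := by
    intro c hc
    induction hc with
    | refl => exact ⟨j₀, rfl, hstart⟩
    | tail hseg hedge ih =>
      rename_i b c'
      obtain ⟨j, hj, hjeq⟩ := ih
      subst hj
      have hk := key j hjeq
      by_cases hrange : c' ∈ Set.range f
      · obtain ⟨j', rfl⟩ := hrange
        exact ⟨j', rfl, hk.2 j' hedge⟩
      · exact absurd (hk.1 _ hrange) hedge
  obtain ⟨j, hj, -⟩ := hprop k₀ (hirr (f j₀) k₀)
  exact hk₀ ⟨j, hj⟩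




lemma submatrix_facts {n : ℕ} (hm : 1 ≤ m) {A B : Matrix (Fin n) (Fin n) ℝ}
    (hB : ∀ i j, 0 ≤ B i j)
    (hAB : A = specRad B • (1 : Matrix (Fin n) (Fin n) ℝ) - B)
    (hirrB : ∀ i j, Relation.ReflTransGen (fun a b => B a b ≠ 0) i j)
    {f : Fin m → Fin n} (hf : Function.Injective f) (hns : ¬ Function.Surjective f) :
    (A.submatrix f f).det ≠ 0 ∧ (∀ i j, 0 ≤ (A.submatrix f f)⁻¹ i j)
      ∧ (∀ i, 0 < (A.submatrix f f)⁻¹ i i) := by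
  set ρ := specRad B with hρ
  set Bf := B.submatrix f f with hBf
  have hsub : A.submatrix f f = ρ • (1 : Matrix (Fin m) (Fin m) ℝ) - Bf := by
    ext i j
    rw [hAB]
    simp only [Matrix.submatrix_apply, Matrix.sub_apply, Matrix.smul_apply,
      Matrix.one_apply, hBf, smul_eq_mul]
    by_cases hij : i = j
    · rw [if_pos hij, if_pos (congrArg f hij)]
    · rw [if_neg hij, if_neg (fun h => hij (hf h))]
  have hlt : specRad Bf < ρ := specRad_submatrix_lt hm hB hirrB hf hns
  have hBf0 : ∀ i j, 0 ≤ Bf i j := fun i j => hB (f i) (f j)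
  have hdet : (ρ • (1 : Matrix (Fin m) (Fin m) ℝ) - Bf).det ≠ 0 :=
    det_ne_zero_of_specRad_lt hlt
  have hres := resolvent_nonneg hm hBf0 hlt
  rw [hsub]
  refine ⟨hdet, hres, ?_⟩
  intro i
  set M := ρ • (1 : Matrix (Fin m) (Fin m) ℝ) - Bf with hM
  have hunit : IsUnit M.det := isUnit_iff_ne_zero.2 hdet
  have hone : ∑ k, M i k * M⁻¹ k i = 1 := by
    have h1 := congrFun (congrFun (Matrix.mul_nonsing_inv M hunit) i) i
    rw [Matrix.mul_apply] at h1
    rw [h1, Matrix.one_apply_eq]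
  have hoff : ∀ k, k ≠ i → M i k * M⁻¹ k i ≤ 0 := by
    intro k hk
    apply mul_nonpos_of_nonpos_of_nonneg _ (hres k i)
    rw [hM, Matrix.sub_apply, Matrix.smul_apply, Matrix.one_apply_ne' hk, smul_eq_mul,
      mul_zero, zero_sub]
    exact neg_nonpos.2 (hBf0 i k)
  have hsplit : M i i * M⁻¹ i i + ∑ k ∈ Finset.univ.erase i, M i k * M⁻¹ k i = 1 := by
    rw [← hone]
    exact Finset.add_sum_erase _ (fun k => M i k * M⁻¹ k i) (Finset.mem_univ i)
  have hrest : ∑ k ∈ Finset.univ.erase i, M i k * M⁻¹ k i ≤ 0 :=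
    Finset.sum_nonpos fun k hk => hoff k (Finset.ne_of_mem_erase hk)
  have hMi : 1 ≤ M i i * M⁻¹ i i := by linarith
  rcases lt_or_eq_of_le (hres i i) with h | h
  · exact h
  · exfalso
    rw [← h, mul_zero] at hMi
    linarith

lemma solve_pos {M : Matrix (Fin m) (Fin m) ℝ} (hdet : M.det ≠ 0)
    (hdiag : ∀ i, 0 < M⁻¹ i i) {u : Fin m → ℝ} {j : Fin m}
    (hu : M.mulVec u = Pi.single j 1) : 0 < u j := by
  have hunit : IsUnit M.det := isUnit_iff_ne_zero.2 hdet
  have h1 : u = M⁻¹.mulVec (Pi.single j 1) := by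
    rw [← hu, Matrix.mulVec_mulVec, Matrix.nonsing_inv_mul _ hunit, Matrix.one_mulVec]
  have h2 : M⁻¹.mulVec (Pi.single j 1) j = M⁻¹ j j := by
    rw [mulVec_entry]
    rw [Finset.sum_eq_single j]
    · rw [Pi.single_eq_same, mul_one]
    · intro k _ hk
      rw [Pi.single_eq_of_ne hk, mul_zero]
    · intro h
      exact absurd (Finset.mem_univ j) h
  rw [h1, h2]
  exact hdiag j


end FSAIAux

theorem fsai_complete_pattern_structure (n : ℕ) (hn : 2 ≤ n)
    (A : Matrix (Fin n) (Fin n) ℝ)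
    (hA : IsSingularMMatrix A) (hirr : IsIrreducibleMatrix A)
    (L U : Matrix (Fin n) (Fin n) ℝ)
    (hL : IsFSAILowerFactor A L
      ({p : Fin n × Fin n | p.2 ≤ p.1} \
        {((⟨n - 1, by omega⟩ : Fin n), (⟨n - 2, by omega⟩ : Fin n))}))
    (hU : IsFSAIUpperFactor A U
      ({p : Fin n × Fin n | p.1 ≤ p.2} \
        {((⟨n - 2, by omega⟩ : Fin n), (⟨n - 1, by omega⟩ : Fin n))})) :
    (∀ i j : Fin n, i ≠ j →
      ¬(i = (⟨n - 1, by omega⟩ : Fin n) ∧ j = (⟨n - 2, by omega⟩ : Fin n)) →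
      ¬(i = (⟨n - 2, by omega⟩ : Fin n) ∧ j = (⟨n - 1, by omega⟩ : Fin n)) →
      (L * A * U) i j = 0) ∧
    (∀ i, 0 < (L * A * U) i i) ∧
    (L * A * U) (⟨n - 2, by omega⟩ : Fin n) (⟨n - 2, by omega⟩ : Fin n) *
        (L * A * U) (⟨n - 1, by omega⟩ : Fin n) (⟨n - 1, by omega⟩ : Fin n)
      = (L * A * U) (⟨n - 1, by omega⟩ : Fin n) (⟨n - 2, by omega⟩ : Fin n) *
        (L * A * U) (⟨n - 2, by omega⟩ : Fin n) (⟨n - 1, by omega⟩ : Fin n) := by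
  classical
  obtain ⟨hZ, B, hB0, hAB⟩ := hA
  obtain ⟨hLtri, hLpat, hLeq⟩ := hL
  obtain ⟨hUtri, hUpat, hUeq⟩ := hU
  have hn1 : 1 ≤ n := by omega
  -- B is irreducible
  have hirrB : ∀ i j, Relation.ReflTransGen (fun p q : Fin n => B p q ≠ 0) i j := by
    refine FSAIAux.irr_transfer (r := fun p q : Fin n => A p q ≠ 0) ?_ hirr
    intro p q hpq hApq hBpq
    apply hApq
    rw [hAB]
    simp only [Matrix.sub_apply, Matrix.smul_apply, Matrix.one_apply_ne hpq, smul_eq_mul,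
      mul_zero, zero_sub, hBpq, neg_zero]
  -- entry conditions in val form
  have hLA : ∀ i k : Fin n, k ≤ i → ¬(i.val = n-1 ∧ k.val = n-2) →
      (L*A) i k = if i = k then 1 else 0 := by
    intro i k hki hne
    refine hLeq (i, k) ⟨hki, fun hmem => ?_⟩
    rw [Set.mem_singleton_iff, Prod.ext_iff] at hmem
    exact hne ⟨congrArg Fin.val hmem.1, congrArg Fin.val hmem.2⟩
  have hAU : ∀ k j : Fin n, k ≤ j → ¬(k.val = n-2 ∧ j.val = n-1) →
      (A*U) k j = if k = j then 1 else 0 := by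
    intro k j hkj hne
    refine hUeq (k, j) ⟨hkj, fun hmem => ?_⟩
    rw [Set.mem_singleton_iff, Prod.ext_iff] at hmem
    exact hne ⟨congrArg Fin.val hmem.1, congrArg Fin.val hmem.2⟩
  have hUab : ∀ p q : Fin n, p.val = n-2 → q.val = n-1 → U p q = 0 := by
    intro p q hp hq
    refine hUpat (p, q) (fun hmem => ?_)
    exact hmem.2 (by
      rw [Set.mem_singleton_iff, Prod.ext_iff]
      exact ⟨Fin.ext hp, Fin.ext hq⟩)
  -- Part 1: off-diagonal entries vanish
  have hlower : ∀ i j : Fin n, j < i → ¬(i.val = n-1 ∧ j.val = n-2) → (L*A*U) i j = 0 := by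
    intro i j hji hne
    rw [Matrix.mul_apply]
    apply Finset.sum_eq_zero
    intro k _
    by_cases hkj : j < k
    · rw [hUtri k j hkj, mul_zero]
    · push_neg at hkj
      have hki : k ≤ i := le_trans hkj hji.le
      have hne2 : ¬(i.val = n-1 ∧ k.val = n-2) := by
        rintro ⟨h1, h2⟩
        apply hne
        have e1 : k.val ≤ j.val := hkj
        have e2 : j.val < i.val := hji
        exact ⟨h1, by omega⟩
      rw [hLA i k hki hne2, if_neg (by
        intro h
        have e0 : i.val = k.val := congrArg Fin.val h
        have e1 : k.val ≤ j.val := hkj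
        have e2 : j.val < i.val := hji
        omega), zero_mul]
  have hupper : ∀ i j : Fin n, i < j → ¬(i.val = n-2 ∧ j.val = n-1) → (L*A*U) i j = 0 := by
    intro i j hij hne
    rw [mul_assoc, Matrix.mul_apply]
    apply Finset.sum_eq_zero
    intro k _
    by_cases hki : i < k
    · rw [hLtri i k hki, zero_mul]
    · push_neg at hki
      have hkj : k ≤ j := le_trans hki hij.le
      have hne2 : ¬(k.val = n-2 ∧ j.val = n-1) := by
        rintro ⟨h1, h2⟩
        apply hne
        have e1 : k.val ≤ i.val := hki
        have e2 : i.val < j.val := hij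
        exact ⟨by omega, h2⟩
      rw [hAU k j hkj hne2, if_neg (by
        intro h
        have e0 : k.val = j.val := congrArg Fin.val h
        have e1 : k.val ≤ i.val := hki
        have e2 : i.val < j.val := hij
        omega), mul_zero]
  -- diagonal entries equal U i i
  have hdiagU : ∀ i : Fin n, (L*A*U) i i = U i i := by
    intro i
    rw [Matrix.mul_apply, Finset.sum_eq_single i]
    · rw [hLA i i (le_refl i) (by rintro ⟨h1, h2⟩; omega), if_pos rfl, one_mul]
    · intro k _ hk
      by_cases hik : i < k
      · rw [hUtri k i hik, mul_zero]
      · push_neg at hik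
        have hki : k < i := lt_of_le_of_ne hik hk
        by_cases hexc : i.val = n-1 ∧ k.val = n-2
        · rw [hUab k i hexc.2 hexc.1, mul_zero]
        · rw [hLA i k hki.le hexc, if_neg (ne_of_gt hki), zero_mul]
    · intro h
      exact absurd (Finset.mem_univ i) h
  -- Positivity of diagonal entries of U
  have hUdiag : ∀ i : Fin n, 0 < U i i := by
    intro i
    by_cases hib : i.val = n - 1
    · -- i is the last index: use the principal submatrix omitting index n-2
      set f : Fin (n-1) → Fin n :=
        fun k => if h : k.val < n - 2 then ⟨k.val, by omega⟩
          else ⟨k.val + 1, by have := k.isLt; omega⟩ with hf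
      have hfval : ∀ k : Fin (n-1), (f k).val = if k.val < n - 2 then k.val else k.val + 1 := by
        intro k
        simp only [hf]
        split_ifs with h <;> rfl
      have hfinj : Function.Injective f := by
        intro p q hpq
        have h1 := congrArg Fin.val hpq
        rw [hfval, hfval] at h1
        apply Fin.ext
        split_ifs at h1 <;> omega
      have hmiss : ∀ k, (f k).val ≠ n - 2 := by
        intro k
        rw [hfval]
        have := k.isLt
        split_ifs <;> omega
      have hfns : ¬ Function.Surjective f := by
        intro hsurj
        obtain ⟨k, hk⟩ := hsurj ⟨n-2, by omega⟩
        exact hmiss k (congrArg Fin.val hk)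
      obtain ⟨hdet, hinv0, hdiaginv⟩ :=
        FSAIAux.submatrix_facts (by omega) hB0 hAB hirrB hfinj hfns
      have hcover : ∀ t : Fin n, t.val ≠ n - 2 → ∃ k, f k = t := by
        intro t ht
        by_cases h : t.val < n - 2
        · refine ⟨⟨t.val, by omega⟩, Fin.ext ?_⟩
          rw [hfval, if_pos h]
        · refine ⟨⟨n-2, by omega⟩, Fin.ext ?_⟩
          have hv : ((⟨n-2, by omega⟩ : Fin (n-1))).val = n - 2 := rfl
          rw [hfval, if_neg (by omega)]
          have := t.isLt
          omega
      set jstar : Fin (n-1) := ⟨n-2, by omega⟩ with hjstar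
      have hjv : jstar.val = n - 2 := rfl
      have hfj : f jstar = i := by
        apply Fin.ext
        rw [hfval, if_neg (by omega)]
        omega
      have hsolve : (A.submatrix f f).mulVec (fun k => U (f k) i) = Pi.single jstar 1 := by
        funext k
        rw [FSAIAux.mulVec_entry]
        have h2 : ∑ l, (A.submatrix f f) k l * U (f l) i
            = ∑ t ∈ Finset.univ.image f, A (f k) t * U t i := by
          rw [Finset.sum_image (fun p _ q _ h => hfinj h)]
          rfl
        have h3 : ∑ t ∈ Finset.univ.image f, A (f k) t * U t i
            = ∑ t : Fin n, A (f k) t * U t i := by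
          apply Finset.sum_subset (Finset.subset_univ _)
          intro t _ ht
          have htv : t.val = n - 2 := by
            by_contra hcon
            obtain ⟨k', hk'⟩ := hcover t hcon
            exact ht (Finset.mem_image.2 ⟨k', Finset.mem_univ _, hk'⟩)
          rw [hUab t i htv hib, mul_zero]
        have h4 : ∑ t : Fin n, A (f k) t * U t i = (A*U) (f k) i := (Matrix.mul_apply).symm
        have h5 : (A*U) (f k) i = if f k = i then 1 else 0 := by
          apply hAU
          · rw [Fin.le_def]
            have := (f k).isLt
            omega
          · rintro ⟨hc, -⟩
            exact hmiss k hc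
        have h6 : (if f k = i then (1:ℝ) else 0) = (Pi.single jstar (1:ℝ) : _ → ℝ) k := by
          rw [Pi.single_apply]
          by_cases hk : k = jstar
          · rw [if_pos (by rw [hk, hfj]), if_pos hk]
          · rw [if_neg, if_neg hk]
            intro hcon
            exact hk (hfinj (by rw [hfj, hcon]))
        rw [h2, h3, h4, h5, h6]
      have hpos := FSAIAux.solve_pos hdet hdiaginv hsolve
      rw [hfj] at hpos
      exact hpos
    · -- i is not the last index: use the leading principal submatrix of size i.val+1
      have hilt : i.val + 1 < n := by
        have := i.isLt
        omega
      set f : Fin (i.val + 1) → Fin n := fun k => ⟨k.val, by have := k.isLt; omega⟩ with hf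
      have hfval : ∀ k : Fin (i.val+1), (f k).val = k.val := fun k => rfl
      have hfinj : Function.Injective f := by
        intro p q hpq
        exact Fin.ext (show p.val = q.val from congrArg (Fin.val : Fin n → ℕ) hpq)
      have hfns : ¬ Function.Surjective f := by
        intro hsurj
        obtain ⟨k, hk⟩ := hsurj ⟨n-1, by omega⟩
        have h1 : k.val = n - 1 := congrArg Fin.val hk
        have h2 := k.isLt
        omega
      obtain ⟨hdet, hinv0, hdiaginv⟩ :=
        FSAIAux.submatrix_facts (by omega) hB0 hAB hirrB hfinj hfns
      set jstar : Fin (i.val+1) := ⟨i.val, Nat.lt_succ_self _⟩ with hjstar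
      have hfj : f jstar = i := Fin.ext rfl
      have hsolve : (A.submatrix f f).mulVec (fun k => U (f k) i) = Pi.single jstar 1 := by
        funext k
        rw [FSAIAux.mulVec_entry]
        have h2 : ∑ l, (A.submatrix f f) k l * U (f l) i
            = ∑ t ∈ Finset.univ.image f, A (f k) t * U t i := by
          rw [Finset.sum_image (fun p _ q _ h => hfinj h)]
          rfl
        have h3 : ∑ t ∈ Finset.univ.image f, A (f k) t * U t i
            = ∑ t : Fin n, A (f k) t * U t i := by
          apply Finset.sum_subset (Finset.subset_univ _)
          intro t _ ht
          have htv : i.val < t.val := by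
            by_contra hcon
            push_neg at hcon
            refine ht (Finset.mem_image.2 ⟨⟨t.val, by omega⟩, Finset.mem_univ _, Fin.ext ?_⟩)
            rw [hfval]
          rw [hUtri t i (Fin.lt_def.mpr htv), mul_zero]
        have h4 : ∑ t : Fin n, A (f k) t * U t i = (A*U) (f k) i := (Matrix.mul_apply).symm
        have h5 : (A*U) (f k) i = if f k = i then 1 else 0 := by
          apply hAU
          · rw [Fin.le_def, hfval]
            have := k.isLt
            omega
          · rintro ⟨-, hc⟩
            exact hib hc
        have h6 : (if f k = i then (1:ℝ) else 0) = (Pi.single jstar (1:ℝ) : _ → ℝ) k := by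
          rw [Pi.single_apply]
          by_cases hk : k = jstar
          · rw [if_pos (by rw [hk, hfj]), if_pos hk]
          · rw [if_neg, if_neg hk]
            intro hcon
            exact hk (hfinj (by rw [hfj, hcon]))
        rw [h2, h3, h4, h5, h6]
      have hpos := FSAIAux.solve_pos hdet hdiaginv hsolve
      rw [hfj] at hpos
      exact hpos
  -- assemble the three parts
  refine ⟨?_, ?_, ?_⟩
  · intro i j hij h1 h2
    rcases lt_or_gt_of_ne hij with hlt | hgt
    · exact hupper i j hlt (fun ⟨c1, c2⟩ => h2 ⟨Fin.ext c1, Fin.ext c2⟩)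
    · exact hlower i j hgt (fun ⟨c1, c2⟩ => h1 ⟨Fin.ext c1, Fin.ext c2⟩)
  · intro i
    rw [hdiagU i]
    exact hUdiag i
  · set pa : Fin n := ⟨n - 2, by omega⟩ with hpa
    set pb : Fin n := ⟨n - 1, by omega⟩ with hpb
    have hdetA : A.det = 0 := by
      rw [hAB]
      exact FSAIAux.det_specRad_smul_sub hn1 hB0
    obtain ⟨v, hv0, hAv⟩ := Matrix.exists_mulVec_eq_zero_iff.2 hdetA
    have hUbt : U.BlockTriangular id := fun i j hij => hUtri i j hij
    have hdetU : U.det ≠ 0 := by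
      rw [Matrix.det_of_upperTriangular hUbt]
      exact (Finset.prod_pos (fun i _ => hUdiag i)).ne'
    set x := U⁻¹.mulVec v with hx
    have hUx : U.mulVec x = v := by
      rw [hx, Matrix.mulVec_mulVec, Matrix.mul_nonsing_inv _ (isUnit_iff_ne_zero.2 hdetU),
        Matrix.one_mulVec]
    have hx0 : x ≠ 0 := by
      intro h
      apply hv0
      rw [← hUx, h, Matrix.mulVec_zero]
    have hMx : (L*A*U).mulVec x = 0 := by
      rw [← Matrix.mulVec_mulVec, hUx, ← Matrix.mulVec_mulVec, hAv, Matrix.mulVec_zero]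
    have hrow : ∀ i : Fin n, ∑ j, (L*A*U) i j * x j = 0 := by
      intro i
      have h1 := congrFun hMx i
      rw [FSAIAux.mulVec_entry] at h1
      exact h1
    have hxj : ∀ j : Fin n, j.val ≠ n-2 → j.val ≠ n-1 → x j = 0 := by
      intro j h1 h2
      have h3 := hrow j
      rw [Finset.sum_eq_single j] at h3
      · rcases mul_eq_zero.1 h3 with h | h
        · exact absurd h (by rw [hdiagU j]; exact (hUdiag j).ne')
        · exact h
      · intro k _ hk
        have hzero : (L*A*U) j k = 0 := by
          rcases lt_or_gt_of_ne hk with hlt | hgt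
          · exact hlower j k hlt (by rintro ⟨hc, -⟩; exact h2 hc)
          · exact hupper j k hgt (by rintro ⟨hc, -⟩; exact h1 hc)
        rw [hzero, zero_mul]
      · intro h
        exact absurd (Finset.mem_univ j) h
    have hpav : pa.val = n - 2 := rfl
    have hpbv : pb.val = n - 1 := rfl
    have hane : pa ≠ pb := by
      intro h
      have h1 : pa.val = pb.val := congrArg Fin.val h
      rw [hpav, hpbv] at h1
      omega
    have hsum2 : ∀ i : Fin n, ∑ j, (L*A*U) i j * x j
        = (L*A*U) i pa * x pa + (L*A*U) i pb * x pb := by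
      intro i
      have hvan : ∀ j ∈ Finset.univ, j ∉ ({pa, pb} : Finset (Fin n)) →
          (L*A*U) i j * x j = 0 := by
        intro j _ hj
        rw [Finset.mem_insert, Finset.mem_singleton] at hj
        push_neg at hj
        rw [hxj j (fun hc => hj.1 (Fin.ext hc)) (fun hc => hj.2 (Fin.ext hc)), mul_zero]
      rw [← Finset.sum_subset (Finset.subset_univ ({pa, pb} : Finset (Fin n))) hvan,
        Finset.sum_pair hane]
    have e1 : (L*A*U) pa pa * x pa + (L*A*U) pa pb * x pb = 0 := by
      rw [← hsum2 pa]
      exact hrow pa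
    have e2 : (L*A*U) pb pa * x pa + (L*A*U) pb pb * x pb = 0 := by
      rw [← hsum2 pb]
      exact hrow pb
    have hdpa : 0 < (L*A*U) pa pa := by rw [hdiagU]; exact hUdiag pa
    have hdpb : 0 < (L*A*U) pb pb := by rw [hdiagU]; exact hUdiag pb
    have hxa : x pa ≠ 0 := by
      intro h
      have hxb : x pb = 0 := by
        rw [h, mul_zero, zero_add] at e2
        rcases mul_eq_zero.1 e2 with hcc | hcc
        · exact absurd hcc hdpb.ne'
        · exact hcc
      apply hx0
      funext j
      by_cases hj2 : j.val = n - 2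
      · rw [show j = pa from Fin.ext hj2]
        exact h
      · by_cases hj1 : j.val = n - 1
        · rw [show j = pb from Fin.ext hj1]
          exact hxb
        · exact hxj j hj2 hj1
    have hxb : x pb ≠ 0 := by
      intro h
      apply hxa
      rw [h, mul_zero, add_zero] at e1
      rcases mul_eq_zero.1 e1 with hcc | hcc
      · exact absurd hcc hdpa.ne'
      · exact hcc
    show (L*A*U) pa pa * (L*A*U) pb pb = (L*A*U) pb pa * (L*A*U) pa pb
    have f1 : (L*A*U) pa pa * x pa = -((L*A*U) pa pb * x pb) := by linarith [e1]
    have f2 : (L*A*U) pb pb * x pb = -((L*A*U) pb pa * x pa) := by linarith [e2]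
    have hkey : ((L*A*U) pa pa * x pa) * ((L*A*U) pb pb * x pb)
        = ((L*A*U) pb pa * x pa) * ((L*A*U) pa pb * x pb) := by
      rw [f1, f2]
      ring
    have hkey2 : (L*A*U) pa pa * (L*A*U) pb pb * (x pa * x pb)
        = (L*A*U) pb pa * (L*A*U) pa pb * (x pa * x pb) := by
      linear_combination hkey
    exact mul_right_cancel₀ (mul_ne_zero hxa hxb) hkey2
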